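/- For every integer n ≥ 2 and every t > 1, one has (n − 1/2)·( t^(2n−2)·Γ(t)/(t^n − 1) − 1/n ) ≥ t^(n−1)·(t^(n−1) − 1)/(t^n − 1) − ((n−1)/n)·t^(−1), where Γ(r) = ln(r) if n = 2 and Γ(r) = (1/(n−2))·(1 − r^(2−n)) if n ≥ 3. -/

import Mathlib

noncomputable def Gam (n : ℕ) (r : ℝ) : ℝ :=
  if n = 2 then Real.log r else (1 / ((n : ℝ) - 2)) * (1 - r ^ ((2 : ℝ) - (n : ℝ)))

noncomputable def kf (n : ℕ) (x : ℝ) : ℝ :=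
  2*((n:ℝ)-1)*(((n:ℝ)-1/2)*Gam n x - 1) + (2*(n:ℝ)-1)*x^((2:ℝ)-(n:ℝ)) - x^((1:ℝ)-2*(n:ℝ))

noncomputable def hf (n : ℕ) (x : ℝ) : ℝ :=
  2*(n:ℝ)*x^((n:ℝ)-1)*(((n:ℝ)-1/2)*Gam n x - 1) + (2*(n:ℝ)-1) + x^(-(n:ℝ))

noncomputable def gf (n : ℕ) (x : ℝ) : ℝ :=
  (n:ℝ)*((n:ℝ)-1/2)*x^(2*(n:ℝ)-2)*Gam n x - ((n:ℝ)-1/2)*(x^((n:ℝ)) - 1)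
    - (n:ℝ)*x^(2*(n:ℝ)-2) + (n:ℝ)*x^((n:ℝ)-1) + ((n:ℝ)-1)*(x^((n:ℝ)-1) - x⁻¹)

lemma Gam_one (n : ℕ) : Gam n 1 = 0 := by
  simp [Gam]

lemma hasDerivAt_Gam (n : ℕ) (hn : 2 ≤ n) {x : ℝ} (hx : 0 < x) :
    HasDerivAt (Gam n) (x ^ ((1:ℝ) - (n:ℝ))) x := by
  by_cases h : n = 2
  · subst h
    have hG : Gam 2 = Real.log := by funext r; simp [Gam]
    rw [hG]
    have := Real.hasDerivAt_log hx.ne'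
    convert this using 1
    rw [show ((1:ℝ) - ((2:ℕ):ℝ)) = -1 by norm_num, Real.rpow_neg_one]
  · have hn3 : 3 ≤ n := by omega
    have hs3 : (3:ℝ) ≤ (n:ℝ) := by exact_mod_cast hn3
    have hG : Gam n = fun r : ℝ => (1 / ((n:ℝ) - 2)) * (1 - r ^ ((2:ℝ) - (n:ℝ))) := by
      funext r; simp [Gam, h]
    rw [hG]
    have h1 : HasDerivAt (fun r : ℝ => r ^ ((2:ℝ) - (n:ℝ)))
        (((2:ℝ) - (n:ℝ)) * x ^ ((2:ℝ) - (n:ℝ) - 1)) x :=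
      Real.hasDerivAt_rpow_const (Or.inl hx.ne')
    have h2 := (h1.const_sub 1).const_mul (1 / ((n:ℝ) - 2))
    convert h2 using 1
    · rfl
    · rfl
    rw [show (2:ℝ) - (n:ℝ) - 1 = 1 - (n:ℝ) by ring]
    have hne : ((n:ℝ) - 2) ≠ 0 := by linarith
    field_simp
    ring

lemma kf_nonneg (n : ℕ) (hn : 2 ≤ n) {x : ℝ} (hx : 1 ≤ x) : 0 ≤ kf n x := by
  have hx0 : (0:ℝ) < x := lt_of_lt_of_le one_pos hx
  by_cases h : n = 2
  · subst h
    have e0 : x ^ ((2:ℝ) - ((2:ℕ):ℝ)) = 1 := by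
      rw [show (2:ℝ) - ((2:ℕ):ℝ) = 0 by norm_num, Real.rpow_zero]
    have e1 : x ^ ((1:ℝ) - 2*((2:ℕ):ℝ)) ≤ 1 :=
      Real.rpow_le_one_of_one_le_of_nonpos hx (by norm_num)
    have e2 : (0:ℝ) ≤ Real.log x := Real.log_nonneg hx
    simp only [kf, Gam, if_pos rfl, e0]
    norm_num at e1 ⊢
    nlinarith [e1, e2]
  · have hn3 : 3 ≤ n := by omega
    have hs3 : (3:ℝ) ≤ (n:ℝ) := by exact_mod_cast hn3
    have hne : ((n:ℝ) - 2) ≠ 0 := by linarith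
    have hkf : kf n x = (3*((n:ℝ)-1)*(1 - x ^ ((2:ℝ)-(n:ℝ)))
        + ((n:ℝ)-2)*(x ^ ((2:ℝ)-(n:ℝ)) - x ^ ((1:ℝ)-2*(n:ℝ))))/((n:ℝ)-2) := by
      simp only [kf, Gam, if_neg h]
      field_simp
      ring
    rw [hkf]
    apply div_nonneg _ (by linarith)
    have ha1 : x ^ ((2:ℝ)-(n:ℝ)) ≤ 1 :=
      Real.rpow_le_one_of_one_le_of_nonpos hx (by linarith)
    have hba : x ^ ((1:ℝ)-2*(n:ℝ)) ≤ x ^ ((2:ℝ)-(n:ℝ)) :=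
      Real.rpow_le_rpow_of_exponent_le hx (by linarith)
    nlinarith [mul_nonneg (by linarith : (0:ℝ) ≤ 1 - x ^ ((2:ℝ)-(n:ℝ)))
        (by linarith : (0:ℝ) ≤ (n:ℝ) - 1),
      mul_nonneg (by linarith : (0:ℝ) ≤ x ^ ((2:ℝ)-(n:ℝ)) - x ^ ((1:ℝ)-2*(n:ℝ)))
        (by linarith : (0:ℝ) ≤ (n:ℝ) - 2)]

lemma hasDerivAt_hf (n : ℕ) (hn : 2 ≤ n) {x : ℝ} (hx : 0 < x) :
    HasDerivAt (hf n) ((n:ℝ) * x ^ ((n:ℝ) - 2) * kf n x) x := by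
  have hs2 : (2:ℝ) ≤ (n:ℝ) := by exact_mod_cast hn
  have h1 : HasDerivAt (fun r : ℝ => r ^ ((n:ℝ) - 1)) (((n:ℝ) - 1) * x ^ ((n:ℝ) - 1 - 1)) x :=
    Real.hasDerivAt_rpow_const (Or.inl hx.ne')
  have h2 : HasDerivAt (fun r : ℝ => ((n:ℝ) - 1/2) * Gam n r - 1)
      (((n:ℝ) - 1/2) * x ^ ((1:ℝ) - (n:ℝ))) x :=
    ((hasDerivAt_Gam n hn hx).const_mul ((n:ℝ) - 1/2)).sub_const 1
  have h3 : HasDerivAt (fun r : ℝ => r ^ (-(n:ℝ))) ((-(n:ℝ)) * x ^ (-(n:ℝ) - 1)) x :=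
    Real.hasDerivAt_rpow_const (Or.inl hx.ne')
  have h4 : HasDerivAt (hf n)
      (((2*(n:ℝ)) * (((n:ℝ) - 1) * x ^ ((n:ℝ) - 1 - 1))) * (((n:ℝ) - 1/2) * Gam n x - 1)
        + (2*(n:ℝ)*x ^ ((n:ℝ) - 1)) * (((n:ℝ) - 1/2) * x ^ ((1:ℝ) - (n:ℝ)))
        + ((-(n:ℝ)) * x ^ (-(n:ℝ) - 1))) x :=
    ((((h1.const_mul (2*(n:ℝ))).mul h2).add_const (2*(n:ℝ)-1)).add h3)
  convert h4 using 1
  have E1 : x ^ ((n:ℝ) - 1 - 1) = x ^ ((n:ℝ) - 2) := by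
    rw [show (n:ℝ) - 1 - 1 = (n:ℝ) - 2 by ring]
  have E2 : x ^ ((n:ℝ) - 2) * x ^ ((2:ℝ) - (n:ℝ)) = 1 := by
    rw [← Real.rpow_add hx]; norm_num
  have E3 : x ^ ((n:ℝ) - 1) * x ^ ((1:ℝ) - (n:ℝ)) = 1 := by
    rw [← Real.rpow_add hx]; norm_num
  have E4 : x ^ ((n:ℝ) - 2) * x ^ ((1:ℝ) - 2*(n:ℝ)) = x ^ (-(n:ℝ) - 1) := by
    rw [← Real.rpow_add hx]; congr 1; ring
  simp only [kf]
  linear_combination (-(2*(n:ℝ)*((n:ℝ)-1)*(((n:ℝ)-1/2)*Gam n x - 1)))*E1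
    + ((n:ℝ)*(2*(n:ℝ)-1))*E2 - ((n:ℝ)*(2*(n:ℝ)-1))*E3 - (n:ℝ)*E4

lemma hasDerivAt_gf (n : ℕ) (hn : 2 ≤ n) {x : ℝ} (hx : 0 < x) :
    HasDerivAt (gf n) (((n:ℝ) - 1) * x ^ ((n:ℝ) - 2) * hf n x) x := by
  have hs2 : (2:ℝ) ≤ (n:ℝ) := by exact_mod_cast hn
  have h1 : HasDerivAt (fun r : ℝ => r ^ (2*(n:ℝ) - 2))
      ((2*(n:ℝ) - 2) * x ^ (2*(n:ℝ) - 2 - 1)) x :=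
    Real.hasDerivAt_rpow_const (Or.inl hx.ne')
  have h2 : HasDerivAt (fun r : ℝ => r ^ ((n:ℝ))) ((n:ℝ) * x ^ ((n:ℝ) - 1)) x :=
    Real.hasDerivAt_rpow_const (Or.inl hx.ne')
  have h3 : HasDerivAt (fun r : ℝ => r ^ ((n:ℝ) - 1)) (((n:ℝ) - 1) * x ^ ((n:ℝ) - 1 - 1)) x :=
    Real.hasDerivAt_rpow_const (Or.inl hx.ne')
  have hG := hasDerivAt_Gam n hn hx
  have h5 : HasDerivAt (fun r : ℝ => r⁻¹) (-(x^2)⁻¹) x := hasDerivAt_inv hx.ne'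
  have T1 := (h1.const_mul ((n:ℝ)*((n:ℝ)-1/2))).mul hG
  have T2 := (h2.sub_const 1).const_mul ((n:ℝ)-1/2)
  have T3 := h1.const_mul ((n:ℝ))
  have T4 := h3.const_mul ((n:ℝ))
  have T5 := (h3.sub h5).const_mul ((n:ℝ)-1)
  have h6 := ((((T1.sub T2).sub T3).add T4).add T5)
  have h7 : HasDerivAt (gf n) _ x := h6
  convert h7 using 1
  have E1 : x ^ ((n:ℝ) - 1 - 1) = x ^ ((n:ℝ) - 2) := by
    rw [show (n:ℝ) - 1 - 1 = (n:ℝ) - 2 by ring]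
  have E2 : x ^ (2*(n:ℝ) - 2 - 1) = x ^ ((n:ℝ) - 2) * x ^ ((n:ℝ) - 1) := by
    rw [← Real.rpow_add hx]; congr 1; ring
  have E3 : x ^ (2*(n:ℝ) - 2) * x ^ ((1:ℝ) - (n:ℝ)) = x ^ ((n:ℝ) - 1) := by
    rw [← Real.rpow_add hx]; congr 1; ring
  have E4 : x ^ ((n:ℝ) - 2) * x ^ (-(n:ℝ)) = (x^2)⁻¹ := by
    rw [← Real.rpow_add hx, show (n:ℝ) - 2 + -(n:ℝ) = -((2:ℕ):ℝ) by push_cast; ring,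
      Real.rpow_neg hx.le, Real.rpow_natCast]
  simp only [hf]
  linear_combination ((n:ℝ)*(2*(n:ℝ)-2) - (n:ℝ)*((n:ℝ)-1/2)*(2*(n:ℝ)-2)*Gam n x)*E2
    + (-((n:ℝ)*((n:ℝ)-1/2)))*E3 + ((n:ℝ)-1)*E4 + (-(((n:ℝ)-1)*(2*(n:ℝ)-1)))*E1

lemma hf_one (n : ℕ) : hf n 1 = 0 := by
  simp [hf, Gam_one]
  ring

lemma hf_nonneg (n : ℕ) (hn : 2 ≤ n) {x : ℝ} (hx : 1 ≤ x) : 0 ≤ hf n x := by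
  have mono : MonotoneOn (hf n) (Set.Ici 1) := by
    apply monotoneOn_of_deriv_nonneg (convex_Ici 1)
    · intro y hy
      exact (hasDerivAt_hf n hn (lt_of_lt_of_le one_pos hy)).continuousAt.continuousWithinAt
    · rw [interior_Ici]
      intro y hy
      exact (hasDerivAt_hf n hn (lt_trans one_pos hy)).differentiableAt.differentiableWithinAt
    · rw [interior_Ici]
      intro y hy
      rw [(hasDerivAt_hf n hn (lt_trans one_pos hy)).deriv]
      exact mul_nonneg (mul_nonneg (by positivity)
        (Real.rpow_nonneg (le_of_lt (lt_trans one_pos hy)) _)) (kf_nonneg n hn hy.le)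
  have := mono (Set.self_mem_Ici) (by exact hx) hx
  rwa [hf_one n] at this

lemma gf_one (n : ℕ) : gf n 1 = 0 := by
  simp [gf, Gam_one]

lemma gf_nonneg (n : ℕ) (hn : 2 ≤ n) {x : ℝ} (hx : 1 ≤ x) : 0 ≤ gf n x := by
  have hs2 : (2:ℝ) ≤ (n:ℝ) := by exact_mod_cast hn
  have mono : MonotoneOn (gf n) (Set.Ici 1) := by
    apply monotoneOn_of_deriv_nonneg (convex_Ici 1)
    · intro y hy
      exact (hasDerivAt_gf n hn (lt_of_lt_of_le one_pos hy)).continuousAt.continuousWithinAt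
    · rw [interior_Ici]
      intro y hy
      exact (hasDerivAt_gf n hn (lt_trans one_pos hy)).differentiableAt.differentiableWithinAt
    · rw [interior_Ici]
      intro y hy
      rw [(hasDerivAt_gf n hn (lt_trans one_pos hy)).deriv]
      exact mul_nonneg (mul_nonneg (by linarith)
        (Real.rpow_nonneg (le_of_lt (lt_trans one_pos hy)) _)) (hf_nonneg n hn hy.le)
  have := mono (Set.self_mem_Ici) (by exact hx) hx
  rwa [gf_one n] at this

theorem stmt_5 (n : ℕ) (hn : 2 ≤ n) (t : ℝ) (ht : 1 < t) :
    ((n : ℝ) - 1 / 2) * (t ^ (2 * (n : ℝ) - 2) * Gam n t / (t ^ (n : ℝ) - 1) - 1 / (n : ℝ)) ≥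
      t ^ ((n : ℝ) - 1) * ((t ^ ((n : ℝ) - 1) - 1) / (t ^ (n : ℝ) - 1)) -
        (((n : ℝ) - 1) / (n : ℝ)) * t⁻¹ := by
  have hs2 : (2:ℝ) ≤ (n:ℝ) := by exact_mod_cast hn
  have ht0 : (0:ℝ) < t := lt_trans one_pos ht
  have hsne : (n:ℝ) ≠ 0 := by linarith
  have hD : 0 < t ^ ((n:ℝ)) - 1 := by
    have h1 : (1:ℝ) = t ^ (0:ℝ) := by simp
    have h2 := Real.rpow_lt_rpow_of_exponent_lt ht (by linarith : (0:ℝ) < (n:ℝ))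
    rw [← h1] at h2
    linarith
  have hg := gf_nonneg n hn ht.le
  have hB : t ^ ((n:ℝ)) = t ^ ((n:ℝ) - 1) * t := by
    rw [← Real.rpow_add_one ht0.ne' ((n:ℝ) - 1)]
    norm_num
  have h2 : t ^ (2 * (n:ℝ) - 2) = t ^ ((n:ℝ) - 1) * t ^ ((n:ℝ) - 1) := by
    rw [← Real.rpow_add ht0]; congr 1; ring
  rw [ge_iff_le, ← sub_nonneg]
  have key : ((n : ℝ) - 1 / 2) * (t ^ (2 * (n : ℝ) - 2) * Gam n t / (t ^ (n : ℝ) - 1) - 1 / (n : ℝ)) -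
      (t ^ ((n : ℝ) - 1) * ((t ^ ((n : ℝ) - 1) - 1) / (t ^ (n : ℝ) - 1)) -
        (((n : ℝ) - 1) / (n : ℝ)) * t⁻¹) = gf n t / ((n:ℝ) * (t ^ ((n:ℝ)) - 1)) := by
    unfold gf
    rw [hB, h2]
    have hDne : t ^ ((n:ℝ) - 1) * t - 1 ≠ 0 := by
      rw [hB] at hD; linarith
    field_simp
    ring
  rw [key]
  exact div_nonneg hg (by positivity)
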